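/- Let $r:(0,\xi)\to(0,\infty)$ be continuous, positive, monotone on a neighborhood of $0+$ and on a neighborhood of $\xi-$, with $\lim_{t\to0+}r(t)=+\infty$, and suppose $\int_0^\xi r(s)\,ds < \infty$. If $w:(0,\xi)\to(0,\infty)$ is differentiable, solves $w' - w^2 = -q r^2$ for some $q>0$, and satisfies $w(t)\to 0$ as $t\to\xi-$, then there exist neighborhoods of $0+$ and $\xi-$ on which $w < \sqrt{q}\,r$, and consequently $\int_0^\xi w(s)\,ds < \infty$. -/
import Mathlib

open MeasureTheory Filter Set

lemma key_gronwall {S : Set ℝ} {q : ℝ} {r w : ℝ → ℝ}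
    (hwode : ∀ t ∈ S, HasDerivAt w (w t ^ 2 - q * r t ^ 2) t)
    {t₀ t₁ : ℝ} (h01 : t₀ ≤ t₁) (hsub : Icc t₀ t₁ ⊆ S)
    {b : ℝ} (hbound : ∀ s ∈ Icc t₀ t₁, q * r s ^ 2 ≤ b ^ 2)
    (hstart : b ≤ w t₀) : b ≤ w t₁ := by
  by_contra hcon
  push_neg at hcon
  have hwc : ContinuousOn w (Icc t₀ t₁) := fun s hs =>
    ((hwode s (hsub hs)).continuousAt).continuousWithinAt
  obtain ⟨C, hC⟩ := isCompact_Icc.exists_bound_of_continuousOn hwc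
  set C' : ℝ := C + b with hC'def
  set g : ℝ → ℝ := fun s => (w s - b) * Real.exp (-C' * s) with hgdef
  have hgd : ∀ s ∈ S, HasDerivAt g
      ((w s ^ 2 - q * r s ^ 2) * Real.exp (-C' * s)
        + (w s - b) * (Real.exp (-C' * s) * -C')) s := by
    intro s hs
    have h1 : HasDerivAt (fun u => w u - b) (w s ^ 2 - q * r s ^ 2) s :=
      (hwode s hs).sub_const b
    have h2 : HasDerivAt (fun u : ℝ => Real.exp (-C' * u)) (Real.exp (-C' * s) * -C') s := by
      have := (HasDerivAt.const_mul (-C') (hasDerivAt_id s)).exp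
      simpa using this
    exact h1.mul h2
  have hgc : ContinuousOn g (Icc t₀ t₁) :=
    (hwc.sub continuousOn_const).mul
      ((Real.continuous_exp.comp (continuous_const.mul continuous_id)).continuousOn)
  have hgt₀ : 0 ≤ g t₀ := mul_nonneg (by linarith) (Real.exp_pos _).le
  have hgt₁ : g t₁ < 0 := mul_neg_of_neg_of_pos (by linarith) (Real.exp_pos _)
  set K : Set ℝ := Icc t₀ t₁ ∩ g ⁻¹' (Ici 0) with hKdef
  have hKclosed : IsClosed K := hgc.preimage_isClosed_of_isClosed isClosed_Icc isClosed_Ici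
  have hKcomp : IsCompact K := isCompact_Icc.of_isClosed_subset hKclosed inter_subset_left
  have hKne : K.Nonempty := ⟨t₀, ⟨left_mem_Icc.2 h01, hgt₀⟩⟩
  set T : ℝ := sSup K with hTdef
  have hTK : T ∈ K := hKcomp.sSup_mem hKne
  have hT1 : T ≤ t₁ := hTK.1.2
  have hTlt : T < t₁ := by
    rcases lt_or_eq_of_le hT1 with h | h
    · exact h
    · exfalso; rw [h] at hTK; exact absurd hTK.2 (not_le.2 hgt₁)
  have hneg : ∀ s ∈ Ioc T t₁, g s < 0 := by
    intro s hs
    by_contra h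
    push_neg at h
    have hsK : s ∈ K := ⟨⟨hTK.1.1.trans hs.1.le, hs.2⟩, h⟩
    exact absurd (le_csSup hKcomp.bddAbove hsK) (not_le.2 hs.1)
  have hmono : MonotoneOn g (Icc T t₁) := by
    apply monotoneOn_of_deriv_nonneg (convex_Icc _ _)
      (hgc.mono (Icc_subset_Icc hTK.1.1 le_rfl))
    · intro x hx
      rw [interior_Icc] at hx
      have hxS : x ∈ S := hsub ⟨hTK.1.1.trans hx.1.le, hx.2.le⟩
      exact ((hgd x hxS).differentiableAt).differentiableWithinAt
    · intro x hx
      rw [interior_Icc] at hx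
      have hxI : x ∈ Icc t₀ t₁ := ⟨hTK.1.1.trans hx.1.le, hx.2.le⟩
      have hxS : x ∈ S := hsub hxI
      rw [(hgd x hxS).deriv]
      have hgx : g x < 0 := hneg x ⟨hx.1, hx.2.le⟩
      have hexp : 0 < Real.exp (-C' * x) := Real.exp_pos _
      have hwb : w x - b < 0 := by
        by_contra hh
        push_neg at hh
        exact absurd (mul_nonneg hh hexp.le) (not_le.2 hgx)
      have hwC : w x ≤ C := (le_abs_self _).trans (by simpa using hC x hxI)
      have hfact : 0 ≤ (b - w x) * (C - w x) :=
        mul_nonneg (by linarith) (by linarith)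
      have hqr : q * r x ^ 2 ≤ b ^ 2 := hbound x hxI
      have hinner : 0 ≤ w x ^ 2 - q * r x ^ 2 - C' * (w x - b) := by nlinarith
      have : (w x ^ 2 - q * r x ^ 2) * Real.exp (-C' * x)
          + (w x - b) * (Real.exp (-C' * x) * -C')
          = (w x ^ 2 - q * r x ^ 2 - C' * (w x - b)) * Real.exp (-C' * x) := by ring
      rw [this]
      exact mul_nonneg hinner hexp.le
  have := hmono (left_mem_Icc.2 hTlt.le) (right_mem_Icc.2 hTlt.le) hTlt.le
  have hgT : 0 ≤ g T := hTK.2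
  linarith

theorem stmt_4 (ξ : EReal) (hξ : 0 < ξ) (q : ℝ) (hq : 0 < q) (r w : ℝ → ℝ)
    (S : Set ℝ) (hSdef : S = {t : ℝ | 0 < t ∧ (t : EReal) < ξ})
    (hrc : ContinuousOn r S) (hrpos : ∀ t ∈ S, 0 < r t)
    (hrmono0 : ∃ ε > (0:ℝ), MonotoneOn r (S ∩ Set.Iio ε) ∨ AntitoneOn r (S ∩ Set.Iio ε))
    (hrmonoξ : ∃ A ∈ Filter.comap (fun t : ℝ => (t : EReal)) (nhdsWithin ξ (Set.Iio ξ)),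
      MonotoneOn r (S ∩ A) ∨ AntitoneOn r (S ∩ A))
    (hr0 : Tendsto r (nhdsWithin 0 (Set.Ioi 0)) atTop)
    (hrint : IntegrableOn r S)
    (hwpos : ∀ t ∈ S, 0 < w t)
    (hwode : ∀ t ∈ S, HasDerivAt w (w t ^ 2 - q * r t ^ 2) t)
    (hwξ : Tendsto w (Filter.comap (fun t : ℝ => (t : EReal)) (nhdsWithin ξ (Set.Iio ξ)))
      (nhds 0)) :
    (∃ ε > (0:ℝ), ∀ t ∈ S ∩ Set.Iio ε, w t < Real.sqrt q * r t) ∧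
    (∃ A ∈ Filter.comap (fun t : ℝ => (t : EReal)) (nhdsWithin ξ (Set.Iio ξ)),
      ∀ t ∈ S ∩ A, w t < Real.sqrt q * r t) ∧
    IntegrableOn w S := by
  have sqpos : 0 < Real.sqrt q := Real.sqrt_pos.2 hq
  have hmemS : ∀ t : ℝ, t ∈ S ↔ 0 < t ∧ (t : EReal) < ξ := by
    intro t; simp [hSdef]
  set F := Filter.comap (fun t : ℝ => (t : EReal)) (nhdsWithin ξ (Set.Iio ξ)) with hFdef
  have memT : ∀ a : ℝ, (a : EReal) < ξ → {t : ℝ | a < t ∧ (t : EReal) < ξ} ∈ F := by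
    intro a ha
    rw [hFdef, Filter.mem_comap]
    refine ⟨Ioi (a : EReal) ∩ Iio ξ, inter_mem
      (mem_nhdsWithin_of_mem_nhds (isOpen_Ioi.mem_nhds ha)) self_mem_nhdsWithin, ?_⟩
    intro t ht
    exact ⟨EReal.coe_lt_coe_iff.1 ht.1, ht.2⟩
  have subT : ∀ B ∈ F, ∃ a : ℝ, (a : EReal) < ξ ∧ {t : ℝ | a < t ∧ (t : EReal) < ξ} ⊆ B := by
    intro B hB
    rw [hFdef, Filter.mem_comap] at hB
    obtain ⟨U, hU, hUB⟩ := hB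
    obtain ⟨V, hVnhds, hVsub⟩ := mem_nhdsWithin_iff_exists_mem_nhds_inter.1 hU
    obtain ⟨l, hlξ, hIoc⟩ := exists_Ioc_subset_of_mem_nhds hVnhds ⟨0, hξ⟩
    obtain ⟨x, hlx, hxξ⟩ := EReal.lt_iff_exists_real_btwn.1 hlξ
    refine ⟨x, hxξ, ?_⟩
    intro t ht
    apply hUB
    have h1 : (t : EReal) ∈ V ∩ Iio ξ :=
      ⟨hIoc ⟨hlx.trans (EReal.coe_lt_coe_iff.2 ht.1), ht.2.le⟩, ht.2⟩
    exact mem_preimage.2 (hVsub h1)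
  have hFne : F.NeBot := by
    rw [hFdef]
    apply Filter.comap_neBot
    intro U hU
    obtain ⟨V, hVnhds, hVsub⟩ := mem_nhdsWithin_iff_exists_mem_nhds_inter.1 hU
    obtain ⟨l, hlξ, hIoc⟩ := exists_Ioc_subset_of_mem_nhds hVnhds ⟨0, hξ⟩
    obtain ⟨x, hlx, hxξ⟩ := EReal.lt_iff_exists_real_btwn.1 hlξ
    exact ⟨x, hVsub ⟨hIoc ⟨hlx, hxξ.le⟩, hxξ⟩⟩
  obtain ⟨y, hy0, hyξ⟩ := EReal.lt_iff_exists_real_btwn.1 hξ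
  have hy0' : (0:ℝ) < y := by exact_mod_cast hy0
  -- Part 1 : near 0
  have part0 : ∃ ε > (0:ℝ), ∀ t ∈ S ∩ Set.Iio ε, w t < Real.sqrt q * r t := by
    obtain ⟨ε, hε, hmon⟩ := hrmono0
    set x : ℝ := min y (ε / 2) with hxdef
    have hx0 : 0 < x := lt_min hy0' (by linarith)
    have hxε : x < ε := (min_le_right _ _).trans_lt (by linarith)
    have hxξ : (x : EReal) < ξ :=
      lt_of_le_of_lt (EReal.coe_le_coe_iff.2 (min_le_left _ _)) hyξ
    have hxS : x ∈ S := (hmemS x).2 ⟨hx0, hxξ⟩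
    have hanti : AntitoneOn r (S ∩ Set.Iio ε) := by
      rcases hmon with hm | ha
      · exfalso
        have hev : ∀ᶠ t in nhdsWithin 0 (Set.Ioi 0), r x < r t := hr0.eventually_gt_atTop (r x)
        have hev2 : ∀ᶠ t in nhdsWithin 0 (Set.Ioi 0), t < x :=
          Filter.Eventually.filter_mono nhdsWithin_le_nhds (eventually_lt_nhds hx0)
        have hev3 : ∀ᶠ t in nhdsWithin 0 (Set.Ioi 0), t ∈ Set.Ioi (0:ℝ) :=
          eventually_mem_nhdsWithin
        obtain ⟨t, htr, htx, ht0⟩ := (hev.and (hev2.and hev3)).exists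
        have htS : t ∈ S ∩ Set.Iio ε :=
          ⟨(hmemS t).2 ⟨ht0, (EReal.coe_lt_coe_iff.2 htx).trans hxξ⟩, htx.trans hxε⟩
        exact absurd (hm htS ⟨hxS, hxε⟩ htx.le) (not_le.2 htr)
      · exact ha
    by_contra hcon
    push_neg at hcon
    set N : ℝ := w x / Real.sqrt q + 1 with hN
    have hevN : ∀ᶠ t in nhdsWithin 0 (Set.Ioi 0), N < r t := hr0.eventually_gt_atTop N
    obtain ⟨δ', hδ'mem, hIoo⟩ := mem_nhdsGT_iff_exists_Ioo_subset.1 hevN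
    obtain ⟨t₀, ht₀mem, ht₀ge⟩ := hcon (min δ' x) (lt_min hδ'mem hx0)
    obtain ⟨ht₀S, ht₀lt⟩ := ht₀mem
    obtain ⟨ht₀0, ht₀ξ⟩ := (hmemS t₀).1 ht₀S
    have ht₀x : t₀ < x := ht₀lt.trans_le (min_le_right _ _)
    have hrt₀ : N < r t₀ := hIoo ⟨ht₀0, ht₀lt.trans_le (min_le_left _ _)⟩
    have hsubI : Icc t₀ x ⊆ S := fun s hs => (hmemS s).2
      ⟨lt_of_lt_of_le ht₀0 hs.1, (EReal.coe_le_coe_iff.2 hs.2).trans_lt hxξ⟩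
    have hb : ∀ s ∈ Icc t₀ x, q * r s ^ 2 ≤ (w t₀) ^ 2 := by
      intro s hs
      have hsS : s ∈ S := hsubI hs
      have hr1 : r s ≤ r t₀ :=
        hanti ⟨ht₀S, ht₀x.trans hxε⟩ ⟨hsS, lt_of_le_of_lt hs.2 hxε⟩ hs.1
      have hrs : 0 < r s := hrpos s hsS
      have h3 : q * r t₀ ^ 2 ≤ (w t₀) ^ 2 := by
        nlinarith [Real.sq_sqrt hq.le, Real.sqrt_nonneg q,
          mul_nonneg (Real.sqrt_nonneg q) (hrpos t₀ ht₀S).le]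
      have h2 : q * r s ^ 2 ≤ q * r t₀ ^ 2 :=
        mul_le_mul_of_nonneg_left (pow_le_pow_left₀ hrs.le hr1 2) hq.le
      linarith
    have hkey : w t₀ ≤ w x := key_gronwall hwode ht₀x.le hsubI hb le_rfl
    have h5 : Real.sqrt q * N = w x + Real.sqrt q := by
      rw [hN]; field_simp
    nlinarith [mul_lt_mul_of_pos_left hrt₀ sqpos]
  -- Part 2 : near ξ
  have partξ : ∃ A ∈ F, ∀ t ∈ S ∩ A, w t < Real.sqrt q * r t := by
    obtain ⟨A, hA, hmon⟩ := hrmonoξ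
    obtain ⟨a, haξ, haA⟩ := subT A hA
    rcases hmon with hm | ha
    · have h1 : ((max a 0 : ℝ) : EReal) < ξ := by
        rcases max_cases a 0 with ⟨h, _⟩ | ⟨h, _⟩ <;> rw [h]
        · exact haξ
        · exact_mod_cast hξ
      obtain ⟨x, hax, hxξ⟩ := EReal.lt_iff_exists_real_btwn.1 h1
      have hax' : max a 0 < x := EReal.coe_lt_coe_iff.1 hax
      have hx0 : (0:ℝ) < x := lt_of_le_of_lt (le_max_right a 0) hax'
      have hxa : a < x := lt_of_le_of_lt (le_max_left a 0) hax'
      have hxS : x ∈ S := (hmemS x).2 ⟨hx0, hxξ⟩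
      have hxA : x ∈ A := haA ⟨hxa, hxξ⟩
      have hcpos : 0 < Real.sqrt q * r x := mul_pos sqpos (hrpos x hxS)
      have hBmem : w ⁻¹' (Set.Iio (Real.sqrt q * r x)) ∈ F :=
        mem_map.1 (hwξ (Iio_mem_nhds hcpos))
      refine ⟨{t : ℝ | x < t ∧ (t : EReal) < ξ} ∩ w ⁻¹' (Set.Iio (Real.sqrt q * r x)),
        inter_mem (memT x hxξ) hBmem, ?_⟩
      rintro t ⟨htS, ⟨htx, htξ⟩, htw⟩
      have htA : t ∈ A := haA ⟨hxa.trans htx, htξ⟩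
      have hrr : r x ≤ r t := hm ⟨hxS, hxA⟩ ⟨htS, htA⟩ htx.le
      calc w t < Real.sqrt q * r x := htw
        _ ≤ Real.sqrt q * r t := mul_le_mul_of_nonneg_left hrr (Real.sqrt_nonneg q)
    · by_contra hcon
      push_neg at hcon
      obtain ⟨t₀, ⟨ht₀S, ht₀T⟩, hge⟩ :=
        hcon {t : ℝ | a < t ∧ (t : EReal) < ξ} (memT a haξ)
      obtain ⟨ht₀0, ht₀ξ⟩ := (hmemS t₀).1 ht₀S
      have hwt₀ : 0 < w t₀ := lt_of_lt_of_le (mul_pos sqpos (hrpos t₀ ht₀S)) hge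
      have hBmem : w ⁻¹' (Set.Iio (w t₀)) ∈ F := mem_map.1 (hwξ (Iio_mem_nhds hwt₀))
      have hmem2 : ({t : ℝ | t₀ < t ∧ (t : EReal) < ξ} ∩ w ⁻¹' (Set.Iio (w t₀))) ∈ F :=
        inter_mem (memT t₀ ht₀ξ) hBmem
      obtain ⟨t₁, ⟨ht₀1, ht₁ξ⟩, ht₁w⟩ := hFne.nonempty_of_mem hmem2
      have hsubI : Icc t₀ t₁ ⊆ S := fun s hs => (hmemS s).2
        ⟨lt_of_lt_of_le ht₀0 hs.1, (EReal.coe_le_coe_iff.2 hs.2).trans_lt ht₁ξ⟩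
      have hb : ∀ s ∈ Icc t₀ t₁, q * r s ^ 2 ≤ (w t₀) ^ 2 := by
        intro s hs
        have hsS : s ∈ S := hsubI hs
        have hsA : s ∈ A := haA
          ⟨lt_of_lt_of_le ht₀T.1 hs.1, (EReal.coe_le_coe_iff.2 hs.2).trans_lt ht₁ξ⟩
        have ht₀A : t₀ ∈ A := haA ht₀T
        have hr1 : r s ≤ r t₀ := ha ⟨ht₀S, ht₀A⟩ ⟨hsS, hsA⟩ hs.1
        have hrs : 0 < r s := hrpos s hsS
        have h3 : q * r t₀ ^ 2 ≤ (w t₀) ^ 2 := by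
          nlinarith [Real.sq_sqrt hq.le, Real.sqrt_nonneg q,
            mul_nonneg (Real.sqrt_nonneg q) (hrpos t₀ ht₀S).le]
        have h2 : q * r s ^ 2 ≤ q * r t₀ ^ 2 :=
          mul_le_mul_of_nonneg_left (pow_le_pow_left₀ hrs.le hr1 2) hq.le
        linarith
      have hkey : w t₀ ≤ w t₁ := key_gronwall hwode ht₀1.le hsubI hb le_rfl
      exact absurd ht₁w (not_lt.2 hkey)
  -- Integrability
  refine ⟨part0, partξ, ?_⟩
  obtain ⟨ε₀, hε₀, hP0⟩ := part0
  obtain ⟨A, hAF, hPA⟩ := partξ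
  obtain ⟨a, haξ, haA⟩ := subT A hAF
  have hSopen : IsOpen S := by
    rw [hSdef]
    exact isOpen_Ioi.inter (isOpen_Iio.preimage continuous_coe_real_ereal)
  have hSmeas : MeasurableSet S := hSopen.measurableSet
  have hwcS : ContinuousOn w S := fun t ht => ((hwode t ht).continuousAt).continuousWithinAt
  have hTaopen : IsOpen {t : ℝ | a < t ∧ (t : EReal) < ξ} :=
    isOpen_Ioi.inter (isOpen_Iio.preimage continuous_coe_real_ereal)
  have hpiece : ∀ B : Set ℝ, MeasurableSet B → (∀ t ∈ S ∩ B, w t < Real.sqrt q * r t) →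
      IntegrableOn w (S ∩ B) := by
    intro B hBm hB
    have hmeas : MeasurableSet (S ∩ B) := hSmeas.inter hBm
    have hint : IntegrableOn (fun t => Real.sqrt q * r t) (S ∩ B) :=
      (hrint.mono_set inter_subset_left).const_mul _
    apply MeasureTheory.Integrable.mono hint ((hwcS.mono inter_subset_left).aestronglyMeasurable hmeas)
    filter_upwards [ae_restrict_mem hmeas] with t ht
    have h1 : 0 < w t := hwpos t ht.1
    have h2 := hB t ht
    rw [Real.norm_eq_abs, Real.norm_eq_abs, abs_of_pos h1]
    exact le_trans h2.le (le_abs_self _)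
  have hIccS : Icc ε₀ a ⊆ S := fun s hs => (hmemS s).2
    ⟨lt_of_lt_of_le hε₀ hs.1, (EReal.coe_le_coe_iff.2 hs.2).trans_lt haξ⟩
  have hmid : IntegrableOn w (Icc ε₀ a) :=
    (hwcS.mono hIccS).integrableOn_compact isCompact_Icc
  have hint1 := hpiece (Set.Iio ε₀) measurableSet_Iio hP0
  have hint3 := hpiece _ hTaopen.measurableSet (fun t ht => hPA t ⟨ht.1, haA ht.2⟩)
  have hcover : S ⊆ (S ∩ Set.Iio ε₀) ∪ (Icc ε₀ a ∪ (S ∩ {t : ℝ | a < t ∧ (t : EReal) < ξ})) := by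
    intro t ht
    rcases lt_or_ge t ε₀ with h | h
    · exact Or.inl ⟨ht, h⟩
    · rcases le_or_gt t a with h2 | h2
      · exact Or.inr (Or.inl ⟨h, h2⟩)
      · exact Or.inr (Or.inr ⟨ht, h2, ((hmemS t).1 ht).2⟩)
  exact (hint1.union (hmid.union hint3)).mono_set hcover
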